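/- Let G be the complete p-partite graph K_{r,...,r} with p parts each of size r (p, r ≥ 2). For integers q, j with 2 ≤ q ≤ r and 1 ≤ j ≤ p-1, the maximum number of edges in an induced subgraph of G on (q-1)p + j vertices equals (q-1)²p(p-1)/2 + j(q-1)(p-1) + j(j-1)/2. -/

import Mathlib

/-- The complete `p`-partite graph `K_{r,...,r}` with `p` parts of size `r`:
vertices are pairs `(part, index)`, and two vertices are adjacent iff they lie
in different parts. -/
def completeEqPartite (p r : ℕ) : SimpleGraph (Fin p × Fin r) where
  Adj u v := u.1 ≠ v.1
  symm := ⟨fun _ _ h => Ne.symm h⟩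
  loopless := ⟨fun _ h => h rfl⟩

instance (p r : ℕ) : DecidableRel (completeEqPartite p r).Adj :=
  fun u v => inferInstanceAs (Decidable (u.1 ≠ v.1))

/-- The number of edges of `G` with both endpoints in `A`
(counted via ordered pairs, divided by 2). -/
def edgesIn {V : Type*} [Fintype V] [DecidableEq V] (G : SimpleGraph V)
    [DecidableRel G.Adj] (A : Finset V) : ℕ :=
  (Finset.univ.filter
    (fun pr : V × V => pr.1 ∈ A ∧ pr.2 ∈ A ∧ G.Adj pr.1 pr.2)).card / 2

/-- `E_G(k)`: the maximum number of edges in an induced subgraph on `k` vertices. -/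
def maxEdges {V : Type*} [Fintype V] [DecidableEq V] (G : SimpleGraph V)
    [DecidableRel G.Adj] (k : ℕ) : ℕ :=
  (Finset.powersetCard k (Finset.univ : Finset V)).sup (edgesIn G)

lemma aux_card_lt (r m : ℕ) (h : m ≤ r) :
    (Finset.univ.filter (fun x : Fin r => x.val < m)).card = m := by
  rcases eq_or_lt_of_le h with h | h
  · subst h
    rw [Finset.filter_true_of_mem]
    · simp
    · intro x _; exact x.isLt
  · have : (Finset.univ.filter (fun x : Fin r => x.val < m)) = Finset.Iio ⟨m, h⟩ := by
      ext x; simp [Fin.lt_def]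
    rw [this, Fin.card_Iio]

lemma aux_count (p r : ℕ) (A : Finset (Fin p × Fin r)) :
    (Finset.univ.filter
      (fun pr : (Fin p × Fin r) × (Fin p × Fin r) =>
        pr.1 ∈ A ∧ pr.2 ∈ A ∧ pr.1.1 ≠ pr.2.1)).card
      + ∑ i : Fin p, (A.filter (fun v => v.1 = i)).card ^ 2 = A.card ^ 2 := by
  have h1 : Finset.univ.filter
      (fun pr : (Fin p × Fin r) × (Fin p × Fin r) =>
        pr.1 ∈ A ∧ pr.2 ∈ A ∧ pr.1.1 ≠ pr.2.1)
      = (A ×ˢ A).filter (fun pr => pr.1.1 ≠ pr.2.1) := by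
    ext pr; simp [Finset.mem_product, and_assoc]
  have h2 : ((A ×ˢ A).filter (fun pr => pr.1.1 = pr.2.1)).card
      = ∑ i : Fin p, (A.filter (fun v => v.1 = i)).card ^ 2 := by
    rw [Finset.card_eq_sum_card_fiberwise
      (f := fun pr : (Fin p × Fin r) × (Fin p × Fin r) => pr.1.1)
      (t := Finset.univ) (fun _ _ => Finset.mem_univ _)]
    refine Finset.sum_congr rfl (fun i _ => ?_)
    have : ((A ×ˢ A).filter (fun pr => pr.1.1 = pr.2.1)).filter
        (fun pr => pr.1.1 = i)
        = (A.filter (fun v => v.1 = i)) ×ˢ (A.filter (fun v => v.1 = i)) := by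
      ext pr
      simp only [Finset.mem_filter, Finset.mem_product]
      constructor
      · rintro ⟨⟨⟨h1, h2⟩, h3⟩, h4⟩; exact ⟨⟨h1, h4⟩, h2, by rw [← h3]; exact h4⟩
      · rintro ⟨⟨h1, h2⟩, h3, h4⟩; exact ⟨⟨⟨h1, h3⟩, h2.trans h4.symm⟩, h2⟩
    rw [this, Finset.card_product, sq]
  have h3 := Finset.card_filter_add_card_filter_not
    (s := A ×ˢ A) (p := fun pr => pr.1.1 = pr.2.1)
  rw [h1]
  have h4 : (A ×ˢ A).card = A.card ^ 2 := by rw [Finset.card_product, sq]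
  simp only [ne_eq]
  omega

lemma aux_min (p q j : ℕ) (c : Fin p → ℕ) (hq : 1 ≤ q)
    (hsum : ∑ i, c i = (q - 1) * p + j) :
    p * (q - 1) ^ 2 + (2 * q - 1) * j ≤ ∑ i, c i ^ 2 := by
  have key : ∀ i : Fin p, (0:ℤ) ≤ ((c i : ℤ) - q) * ((c i : ℤ) - q + 1) := by
    intro i
    rcases le_or_gt (q : ℤ) (c i) with h | h
    · nlinarith
    · nlinarith [Int.lt_iff_add_one_le.mp h]
  have hs := Finset.sum_nonneg (fun i (_ : i ∈ Finset.univ) => key i)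
  have expand : ∑ i : Fin p, ((c i : ℤ) - q) * ((c i : ℤ) - q + 1)
      = ∑ i : Fin p, (c i : ℤ) ^ 2 - (2 * q - 1) * ∑ i : Fin p, (c i : ℤ)
        + p * (q * (q - 1)) := by
    rw [Finset.mul_sum, ← Finset.sum_sub_distrib]
    rw [show (p : ℤ) * ((q:ℤ) * ((q:ℤ) - 1)) = ∑ _i : Fin p, (q:ℤ) * ((q:ℤ) - 1) by
      rw [Finset.sum_const, Finset.card_univ, Fintype.card_fin]; ring]
    rw [← Finset.sum_add_distrib]
    exact Finset.sum_congr rfl (fun i _ => by ring)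
  have hcast : (∑ i : Fin p, (c i : ℤ)) = ((q:ℤ) - 1) * p + j := by
    rw [← Nat.cast_sum, hsum]
    push_cast [Nat.cast_sub hq]
    ring
  have hsq : (∑ i : Fin p, (c i : ℤ) ^ 2) = ((∑ i, c i ^ 2 : ℕ) : ℤ) := by
    push_cast; rfl
  zify [hq, show 1 ≤ 2 * q by omega]
  rw [expand, hcast, hsq] at hs
  linarith

lemma aux_arith (p q j : ℕ) (hp : 2 ≤ p) (hq : 2 ≤ q) (hj1 : 1 ≤ j) :
    ((q - 1) * p + j) ^ 2
      = (p * (q - 1) ^ 2 + (2 * q - 1) * j)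
        + 2 * ((q - 1) ^ 2 * p * (p - 1) / 2 + j * (q - 1) * (p - 1) + j * (j - 1) / 2) := by
  obtain ⟨a, rfl⟩ : ∃ a, q = a + 1 := ⟨q - 1, by omega⟩
  obtain ⟨b, rfl⟩ : ∃ b, p = b + 1 := ⟨p - 1, by omega⟩
  obtain ⟨c, rfl⟩ : ∃ c, j = c + 1 := ⟨j - 1, by omega⟩
  simp only [Nat.add_sub_cancel]
  obtain ⟨m, hm⟩ : ∃ m, (b + 1) * b = 2 * m := by
    rcases Nat.even_mul_succ_self b with ⟨m, hm⟩; exact ⟨m, by rw [mul_comm, hm]; omega⟩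
  obtain ⟨n, hn⟩ : ∃ n, (c + 1) * c = 2 * n := by
    rcases Nat.even_mul_succ_self c with ⟨n, hn⟩; exact ⟨n, by rw [mul_comm, hn]; omega⟩
  have e1 : a ^ 2 * (b + 1) * b / 2 = a ^ 2 * m := by
    rw [mul_assoc, hm, mul_left_comm, Nat.mul_div_cancel_left _ (by norm_num)]
  have e2 : (c + 1) * c / 2 = n := by omega
  rw [e1, e2, show 2 * (a + 1) - 1 = 2 * a + 1 from by omega]
  nlinarith [hm, hn]

lemma aux_edgesIn (p r : ℕ) (A : Finset (Fin p × Fin r)) :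
    edgesIn (completeEqPartite p r) A
      = (A.card ^ 2 - ∑ i : Fin p, (A.filter (fun v => v.1 = i)).card ^ 2) / 2 := by
  have h := aux_count p r A
  have h2 : edgesIn (completeEqPartite p r) A
      = (Finset.univ.filter (fun pr : (Fin p × Fin r) × (Fin p × Fin r) =>
          pr.1 ∈ A ∧ pr.2 ∈ A ∧ pr.1.1 ≠ pr.2.1)).card / 2 := rfl
  omega

set_option maxHeartbeats 1000000 in
theorem stmt2 (p r q j : ℕ) (hp : 2 ≤ p) (hr : 2 ≤ r) (hq1 : 2 ≤ q) (hq2 : q ≤ r)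
    (hj1 : 1 ≤ j) (hj2 : j ≤ p - 1) :
    maxEdges (completeEqPartite p r) ((q - 1) * p + j) =
      (q - 1) ^ 2 * p * (p - 1) / 2 + j * (q - 1) * (p - 1) + j * (j - 1) / 2 := by
  set k := (q - 1) * p + j with hk
  set RHS := (q - 1) ^ 2 * p * (p - 1) / 2 + j * (q - 1) * (p - 1) + j * (j - 1) / 2 with hRHS
  have harith := aux_arith p q j hp hq1 hj1
  rw [← hk, ← hRHS] at harith
  have c1 : (Finset.univ.filter (fun i : Fin p => i.val < j)).card = j :=
    aux_card_lt p j (by omega)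
  have c2 : (Finset.univ.filter (fun i : Fin p => ¬ i.val < j)).card = p - j := by
    have := Finset.card_filter_add_card_filter_not
      (s := (Finset.univ : Finset (Fin p))) (p := fun i => i.val < j)
    simp only [Finset.card_univ, Fintype.card_fin] at this
    omega
  apply le_antisymm
  · apply Finset.sup_le
    intro A hA
    rw [Finset.mem_powersetCard] at hA
    have hcard : A.card = k := hA.2
    have hfib : ∑ i : Fin p, (A.filter (fun v => v.1 = i)).card = k := by
      rw [← hcard]
      exact (Finset.card_eq_sum_card_fiberwise (fun v _ => Finset.mem_univ v.1)).symm
    have hmin := aux_min p q j (fun i => (A.filter (fun v => v.1 = i)).card) (by omega) hfib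
    beta_reduce at hmin
    rw [aux_edgesIn, hcard]
    omega
  · set A : Finset (Fin p × Fin r) := Finset.univ.filter
      (fun v : Fin p × Fin r => v.2.val < q - 1 ∨ (v.2.val = q - 1 ∧ v.1.val < j)) with hAdef
    have hcnt : ∀ i : Fin p,
        (A.filter (fun v => v.1 = i)).card = if i.val < j then q else q - 1 := by
      intro i
      have hbij : (A.filter (fun v => v.1 = i)).card
          = (Finset.univ.filter (fun x : Fin r =>
              x.val < q - 1 ∨ (x.val = q - 1 ∧ i.val < j))).card := by
        apply Finset.card_bij (fun v _ => v.2)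
        · intro v hv
          simp only [hAdef, Finset.mem_filter, Finset.mem_univ, true_and] at hv ⊢
          rcases hv with ⟨h1, h2⟩
          subst h2
          exact h1
        · intro v hv w hw hvw
          simp only [hAdef, Finset.mem_filter] at hv hw
          exact Prod.ext (hv.2.trans hw.2.symm) hvw
        · intro x hx
          simp only [Finset.mem_filter, Finset.mem_univ, true_and] at hx
          exact ⟨(i, x), by simp [hAdef, hx], rfl⟩
      rw [hbij]
      by_cases hij : i.val < j
      · simp only [hij, if_true, and_true]
        have : (Finset.univ.filter (fun x : Fin r =>
            x.val < q - 1 ∨ x.val = q - 1)) = Finset.univ.filter (fun x : Fin r => x.val < q) := by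
          apply Finset.filter_congr
          intro x _
          omega
        rw [this]
        exact aux_card_lt r q hq2
      · simp only [hij, if_false, and_false, or_false]
        rw [aux_card_lt r (q - 1) (by omega)]
    have hsum : ∑ i : Fin p, (A.filter (fun v => v.1 = i)).card = k := by
      simp only [hcnt]
      rw [Finset.sum_ite, Finset.sum_const, Finset.sum_const, c1, c2, hk,
        smul_eq_mul, smul_eq_mul]
      zify [show j ≤ p from by omega, show 1 ≤ q from by omega]
      ring
    have hsumsq : ∑ i : Fin p, (A.filter (fun v => v.1 = i)).card ^ 2
        = p * (q - 1) ^ 2 + (2 * q - 1) * j := by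
      simp only [hcnt]
      have hpow : ∀ x : Fin p, (if x.val < j then q else q - 1) ^ 2
          = if x.val < j then q ^ 2 else (q - 1) ^ 2 := by
        intro x; split <;> rfl
      simp only [hpow]
      rw [Finset.sum_ite, Finset.sum_const, Finset.sum_const, c1, c2,
        smul_eq_mul, smul_eq_mul]
      zify [show j ≤ p from by omega, show 1 ≤ q from by omega, show 1 ≤ 2 * q from by omega]
      ring
    have hcard : A.card = k := by
      rw [Finset.card_eq_sum_card_fiberwise (fun v _ => Finset.mem_univ v.1)]
      exact hsum
    have hmem : A ∈ Finset.powersetCard k (Finset.univ : Finset (Fin p × Fin r)) := by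
      rw [Finset.mem_powersetCard]
      exact ⟨Finset.subset_univ A, hcard⟩
    have hle := Finset.le_sup (f := edgesIn (completeEqPartite p r)) hmem
    refine le_trans ?_ hle
    rw [aux_edgesIn, hcard, hsumsq]
    omega
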